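/- Let I be a right ideal of R such that every right ideal of R lies over a direct summand of R_R. Then every homomorphism from a small right ideal of R to I extends to an endomorphism of R_R if and only if every homomorphism from any right ideal of R to I extends to an endomorphism of R_R. -/

import Mathlib

/-- A right ideal `I` of `R` (viewed as a submodule of `R` over `Rᵐᵒᵖ`) is small if
`I + K ≠ R` for every proper right ideal `K`. -/
def IsSmallRightIdeal {R : Type*} [Ring R] (I : Submodule Rᵐᵒᵖ R) : Prop :=
  ∀ K : Submodule Rᵐᵒᵖ R, I ⊔ K = ⊤ → K = ⊤

/-- A right `R`-module `M` is small injective if every `R`-homomorphism from a small right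
ideal of `R` to `M` extends to a homomorphism `R → M`. -/
def SmallInjective (R : Type*) [Ring R] (M : Type*) [AddCommGroup M] [Module Rᵐᵒᵖ M] : Prop :=
  ∀ I : Submodule Rᵐᵒᵖ R, IsSmallRightIdeal I → ∀ f : I →ₗ[Rᵐᵒᵖ] M,
    ∃ g : R →ₗ[Rᵐᵒᵖ] M, ∀ x : I, g x = f x


/-- A right ideal `K` lies over a direct summand of `R` if `R = P ⊕ Q` with `P ≤ K` and
`Q ∩ K` small in `R` as a right module. -/
def LiesOverSummand {R : Type*} [Ring R] (K : Submodule Rᵐᵒᵖ R) : Prop :=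
  ∃ P Q : Submodule Rᵐᵒᵖ R, IsCompl P Q ∧ P ≤ K ∧ IsSmallRightIdeal (Q ⊓ K)

/-- If every right ideal of `R` lies over a direct summand of `R`, then for a right ideal
`I`, every homomorphism from a small right ideal to `I` extends to an endomorphism of `R`
iff every homomorphism from any right ideal to `I` so extends. -/
theorem stmt_14 {R : Type*} [Ring R] (hlo : ∀ K : Submodule Rᵐᵒᵖ R, LiesOverSummand K)
    (I : Submodule Rᵐᵒᵖ R) :
    (∀ (K : Submodule Rᵐᵒᵖ R), IsSmallRightIdeal K → ∀ f : K →ₗ[Rᵐᵒᵖ] R,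
        (∀ x : K, f x ∈ I) → ∃ g : R →ₗ[Rᵐᵒᵖ] R, ∀ x : K, g x = f x) ↔
    (∀ (K : Submodule Rᵐᵒᵖ R) (f : K →ₗ[Rᵐᵒᵖ] R), (∀ x : K, f x ∈ I) →
        ∃ g : R →ₗ[Rᵐᵒᵖ] R, ∀ x : K, g x = f x) := by
  constructor
  · intro hsmall K f hfI
    obtain ⟨P, Q, hc, hPK, hQKsmall⟩ := hlo K
    -- restrict f to Q ⊓ K
    set fQ : (Q ⊓ K : Submodule Rᵐᵒᵖ R) →ₗ[Rᵐᵒᵖ] R :=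
      f.comp (Submodule.inclusion inf_le_right) with hfQ
    obtain ⟨g, hg⟩ := hsmall (Q ⊓ K) hQKsmall fQ (fun x => hfI _)
    -- projections
    set πP := P.linearProjOfIsCompl Q hc with hπP
    set πQ := Q.linearProjOfIsCompl P hc.symm with hπQ
    refine ⟨(f.comp ((Submodule.inclusion hPK).comp πP)) + g.comp (Q.subtype.comp πQ), ?_⟩
    intro x
    have hsum : ((πP x : R)) + ((πQ x : R)) = (x : R) :=
      Submodule.projection_add_projection_eq_self hc (x : R)
    have hπQK : ((πQ x : R)) ∈ Q ⊓ K := by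
      refine ⟨(πQ x).2, ?_⟩
      have : ((πQ x : R)) = (x : R) - ((πP x : R)) := eq_sub_of_add_eq' hsum
      rw [this]
      exact sub_mem x.2 (hPK (πP x).2)
    have hgval : g ((πQ x : R)) = f ⟨(πQ x : R), hπQK.2⟩ := by
      have := hg ⟨(πQ x : R), hπQK⟩
      exact this
    simp only [LinearMap.add_apply, LinearMap.comp_apply, Submodule.subtype_apply]
    rw [hgval]
    have : f (Submodule.inclusion hPK (πP x)) + f ⟨(πQ x : R), hπQK.2⟩
        = f ((Submodule.inclusion hPK (πP x)) + ⟨(πQ x : R), hπQK.2⟩) := (map_add f _ _).symm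
    rw [this]
    congr 1
    ext
    simpa [Submodule.inclusion] using hsum
  · intro hall K _ f hfI
    exact hall K f hfI
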